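/- Let C be a ℂ-linear abelian category and M an object of C whose endomorphism algebra End_C(M) is finite dimensional over ℂ, say of dimension d. Let e ∈ End_C(M) be any endomorphism, and for α ∈ ℂ let M_α denote the subobject ker((e − α·id_M)^d) of M. Then the set A = {α ∈ ℂ : M_α ≠ 0} is finite, and the canonical morphism ⨁_{α ∈ A} M_α → M (induced by the inclusions of the subobjects M_α) is an isomorphism. Moreover, if e is an isomorphism, then 0 ∉ A. -/

import Mathlib

open CategoryTheory Limits Polynomial

/-- The `n`-fold composition power `f ≫ f ≫ ⋯ ≫ f` of an endomorphism `f`. -/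
def compPow {C : Type*} [Category C] {M : C} (f : M ⟶ M) : ℕ → (M ⟶ M)
  | 0 => 𝟙 M
  | (n + 1) => f ≫ compPow f n

/-- The generalized eigen-subobject `M_α = ker((e − α·id_M)^d)` of an endomorphism `e`
of `M`, where `d = dim_ℂ End(M)`. -/
noncomputable def genEigenKer {C : Type*} [Category C] [Abelian C]
    [CategoryTheory.Linear ℂ C] {M : C} (e : M ⟶ M) (d : ℕ) (α : ℂ) : C :=
  kernel (compPow (e - α • 𝟙 M) d)

section Aux

/-- View an endomorphism as an element of the endomorphism monoid. -/
def toEnd {C : Type*} [Category C] {M : C} (f : M ⟶ M) : CategoryTheory.End M := f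

lemma isIso_compPow {C : Type*} [Category C] {M : C} (f : M ⟶ M) [IsIso f] :
    ∀ n, IsIso (compPow f n)
  | 0 => by show IsIso (𝟙 M); infer_instance
  | (n + 1) => by
      haveI := isIso_compPow f n
      show IsIso (f ≫ compPow f n)
      infer_instance

variable {C : Type*} [Category C] [Abelian C] [CategoryTheory.Linear ℂ C] {M : C}

lemma compPow_eq_pow (f : CategoryTheory.End M) (n : ℕ) : compPow f n = f ^ n := by
  induction n with
  | zero => rfl
  | succ n ih =>
    show f ≫ compPow f n = _
    rw [ih, pow_succ]
    rfl

lemma aeval_X_sub_C_pow (e : M ⟶ M) (α : ℂ) (n : ℕ) :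
    aeval (toEnd e) ((X - Polynomial.C α) ^ n) = compPow (e - α • 𝟙 M) n := by
  have h1 : aeval (toEnd e) (X - Polynomial.C α) = e - α • 𝟙 M := by
    rw [map_sub, aeval_X, aeval_C, Algebra.algebraMap_eq_smul_one]
    rfl
  rw [map_pow, h1, compPow_eq_pow]

end Aux

/-- **Generalized eigenspace decomposition of an object.**
Let `C` be a `ℂ`-linear abelian category and `M` an object with `End(M)`
finite-dimensional of dimension `d`.  For any endomorphism `e` of `M`, the set
`A = {α : M_α ≠ 0}` of generalized eigenvalues is finite (collected in a finite set `s`),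
and the canonical morphism `⨁_{α ∈ A} M_α → M` induced by the kernel inclusions is an
isomorphism.  Moreover, if `e` is an isomorphism, then `0 ∉ A`. -/
theorem stmt_4 {C : Type*} [Category C] [Abelian C] [CategoryTheory.Linear ℂ C]
    (M : C) [FiniteDimensional ℂ (M ⟶ M)] (e : M ⟶ M) :
    letI : HasFiniteBiproducts C := Abelian.hasFiniteBiproducts
    ∃ s : Finset ℂ,
      (∀ α : ℂ, ¬ IsZero (genEigenKer e (Module.finrank ℂ (M ⟶ M)) α) → α ∈ s) ∧
      (∀ α ∈ s, ¬ IsZero (genEigenKer e (Module.finrank ℂ (M ⟶ M)) α)) ∧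
      IsIso (biproduct.desc
        (f := fun α : s => genEigenKer e (Module.finrank ℂ (M ⟶ M)) (α : ℂ))
        (fun α => kernel.ι _)) ∧
      (IsIso e → (0 : ℂ) ∉ s) := by
  classical
  letI : HasFiniteBiproducts C := Abelian.hasFiniteBiproducts
  set d := Module.finrank ℂ (M ⟶ M) with hdd
  by_cases hM : IsZero M
  · refine ⟨∅, ?_, ?_, ?_, ?_⟩
    · intro α hα
      exact absurd (IsZero.of_mono (kernel.ι (compPow (e - α • 𝟙 M) d)) hM) hα
    · intro α hα; exact absurd hα (Finset.notMem_empty α)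
    · refine ⟨⟨0, ?_, hM.eq_of_src _ _⟩⟩
      apply biproduct.hom_ext'
      rintro ⟨j, hj⟩
      exact absurd hj (Finset.notMem_empty j)
    · intro _; exact Finset.notMem_empty 0
  -- main case
  letI : FiniteDimensional ℂ (CategoryTheory.End M) := ‹FiniteDimensional ℂ (M ⟶ M)›
  -- an annihilating polynomial of degree ≤ d
  obtain ⟨p, hp0, hpd, hpe⟩ : ∃ p : ℂ[X], p ≠ 0 ∧ p.natDegree ≤ d ∧
      aeval (toEnd e) p = 0 := by
    have hnl : ¬ LinearIndependent ℂ (fun i : Fin (d + 1) => (toEnd e) ^ (i : ℕ)) := by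
      intro h
      have h2 := h.fintype_card_le_finrank
      have h3 : Module.finrank ℂ (CategoryTheory.End M) = d := rfl
      simp only [Fintype.card_fin, h3] at h2
      omega
    rw [Fintype.not_linearIndependent_iff] at hnl
    obtain ⟨g, hg, i, hi⟩ := hnl
    refine ⟨∑ j : Fin (d + 1), Polynomial.monomial (j : ℕ) (g j), ?_, ?_, ?_⟩
    · intro h
      apply hi
      have := congrArg (fun q => Polynomial.coeff q (i : ℕ)) h
      simpa [Polynomial.finset_sum_coeff, Polynomial.coeff_monomial, Fin.val_eq_val] using this
    · exact natDegree_sum_le_of_forall_le _ _ (fun j _ =>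
        (natDegree_monomial_le _).trans (Nat.lt_succ_iff.mp j.isLt))
    · rw [map_sum]
      simpa [aeval_monomial, ← Algebra.smul_def] using hg
  set t : Finset ℂ := p.roots.toFinset with ht
  have hsplits : p.Splits := IsAlgClosed.splits p
  -- `p` divides the big product
  have hPdvd : p ∣ ∏ α ∈ t, (X - Polynomial.C α) ^ d := by
    have h1 : p = Polynomial.C p.leadingCoeff * (p.roots.map fun a => X - Polynomial.C a).prod :=
      hsplits.eq_prod_roots
    have h2 : (p.roots.map fun a => X - Polynomial.C a).prod ∣
        ∏ α ∈ t, (X - Polynomial.C α) ^ d := by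
      rw [Finset.prod_multiset_map_count]
      apply Finset.prod_dvd_prod_of_dvd
      intro α hα
      apply pow_dvd_pow
      calc p.roots.count α ≤ Multiset.card p.roots := Multiset.count_le_card _ _
        _ ≤ p.natDegree := p.card_roots'
        _ ≤ d := hpd
    have h3 : p ∣ (p.roots.map fun a => X - Polynomial.C a).prod := by
      obtain ⟨u, hu⟩ := isUnit_iff_exists_inv.mp (Polynomial.isUnit_C.mpr
        (isUnit_iff_ne_zero.mpr (leadingCoeff_ne_zero.mpr hp0)))
      refine ⟨u, ?_⟩
      conv_rhs => rw [h1]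
      rw [mul_assoc, mul_comm ((p.roots.map fun a => X - Polynomial.C a).prod) u,
        ← mul_assoc, hu, one_mul]
    exact h3.trans h2
  have haevalprod : aeval (toEnd e) (∏ α ∈ t, (X - Polynomial.C α) ^ d) = 0 := by
    obtain ⟨c, hc⟩ := hPdvd
    rw [hc, map_mul, hpe, zero_mul]
  -- α outside t gives zero kernel
  have hout : ∀ α : ℂ, α ∉ t → IsZero (genEigenKer e d α) := by
    intro α hα
    have hnr : ¬ p.IsRoot α := fun h => hα (Multiset.mem_toFinset.mpr ((mem_roots hp0).mpr h))
    have hcop : IsCoprime (X - Polynomial.C α) p :=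
      (Polynomial.irreducible_X_sub_C α).coprime_iff_not_dvd.mpr
        (fun h => hnr (dvd_iff_isRoot.mp h))
    obtain ⟨u, v, huv⟩ := hcop
    have h1 : (aeval (toEnd e) u) * (aeval (toEnd e) (X - Polynomial.C α)) = 1 := by
      have h := congrArg (aeval (toEnd e)) huv
      rw [map_add, map_mul, map_mul, hpe, mul_zero, add_zero, map_one] at h
      exact h
    have h2 : (aeval (toEnd e) (X - Polynomial.C α)) * (aeval (toEnd e) u) = 1 := by
      rw [← map_mul, mul_comm, map_mul, h1]
    have hunit : IsUnit (aeval (toEnd e) (X - Polynomial.C α)) :=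
      ⟨⟨aeval (toEnd e) (X - Polynomial.C α), aeval (toEnd e) u, h2, h1⟩, rfl⟩
    have hb : IsUnit (aeval (toEnd e) ((X - Polynomial.C α) ^ d)) := by
      rw [map_pow]; exact hunit.pow d
    rw [aeval_X_sub_C_pow e α d] at hb
    obtain ⟨w, hw⟩ := hb
    haveI hiso : IsIso (compPow (e - α • 𝟙 M) d) := by
      refine ⟨⟨(↑w⁻¹ : CategoryTheory.End M), ?_, ?_⟩⟩
      · show ((↑w⁻¹ : CategoryTheory.End M) * toEnd (compPow (e - α • 𝟙 M) d)
            : CategoryTheory.End M) = 1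
        rw [show toEnd (compPow (e - α • 𝟙 M) d) = ↑w from hw ▸ rfl, Units.inv_mul]
      · show ((toEnd (compPow (e - α • 𝟙 M) d) : CategoryTheory.End M) *
            (↑w⁻¹ : CategoryTheory.End M) : CategoryTheory.End M) = 1
        rw [show toEnd (compPow (e - α • 𝟙 M) d) = ↑w from hw ▸ rfl, Units.mul_inv]
    exact (isZero_zero C).of_iso (kernel.ofMono (compPow (e - α • 𝟙 M) d))
  -- t is nonempty
  have htne : t.Nonempty := by
    rw [Finset.nonempty_iff_ne_empty]
    intro h
    have hroots : p.roots = 0 := by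
      rw [← Multiset.toFinset_eq_empty, ← ht, h]
    have hdeg : p.natDegree = 0 := by
      have h2 := hsplits.natDegree_eq_card_roots
      rwa [hroots, Multiset.card_zero] at h2
    have hpc : p = Polynomial.C (p.coeff 0) := eq_C_of_natDegree_eq_zero hdeg
    have hc0 : p.coeff 0 ≠ 0 := fun h0 => hp0 (by rw [hpc, h0, map_zero])
    apply hM
    rw [IsZero.iff_id_eq_zero]
    have h3 : aeval (toEnd e) p = (p.coeff 0) • (1 : CategoryTheory.End M) := by
      conv_lhs => rw [hpc]
      rw [aeval_C, Algebra.algebraMap_eq_smul_one]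
    rw [hpe] at h3
    have h4 : (1 : CategoryTheory.End M) = 0 :=
      (smul_eq_zero.mp h3.symm).resolve_left hc0
    exact h4
  -- Bezout decomposition
  have hcop : Pairwise (Function.onFun IsCoprime fun α : t => (X - Polynomial.C (α : ℂ)) ^ d) := by
    have h := Polynomial.pairwise_coprime_X_sub_C (K := ℂ) (I := t)
      (s := fun α : t => (α : ℂ)) Subtype.val_injective
    intro a b hab
    exact (h hab).pow
  obtain ⟨r, hr⟩ := (exists_sum_eq_one_iff_pairwise_coprime
    (s := fun α : ℂ => (X - Polynomial.C α) ^ d) htne).mpr hcop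
  set q : ℂ → ℂ[X] := fun α => r α * ∏ β ∈ t \ {α}, (X - Polynomial.C β) ^ d with hq
  set P : ℂ → (M ⟶ M) := fun α => (aeval (toEnd e) (q α) : CategoryTheory.End M) with hP
  have hPsum : ∑ α ∈ t, P α = 𝟙 M := by
    have h := congrArg (aeval (toEnd e)) hr
    rw [map_sum, map_one] at h
    exact h
  -- P α factors through the kernel
  have hker0 : ∀ α ∈ t, P α ≫ compPow (e - α • 𝟙 M) d = 0 := by
    intro α hα
    have hfac : (X - Polynomial.C α) ^ d * q α = r α * ∏ β ∈ t, (X - Polynomial.C β) ^ d := by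
      simp only [hq]
      rw [Finset.prod_eq_prod_diff_singleton_mul hα (fun β => (X - Polynomial.C β) ^ d)]
      ring
    have key : aeval (toEnd e) (q α) ≫ aeval (toEnd e) ((X - Polynomial.C α) ^ d) = 0 := by
      show aeval (toEnd e) ((X - Polynomial.C α) ^ d) * aeval (toEnd e) (q α) = 0
      rw [← map_mul, hfac, map_mul, haevalprod, mul_zero]
    rw [← aeval_X_sub_C_pow e α d]
    exact key
  -- kernel inclusion kills P β for β ≠ α
  have hιP : ∀ α ∈ t, ∀ β ∈ t, β ≠ α →
      kernel.ι (compPow (e - α • 𝟙 M) d) ≫ P β = 0 := by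
    intro α hα β hβ hne
    have hdvd : (X - Polynomial.C α) ^ d ∣ q β := by
      apply Dvd.dvd.mul_left
      apply Finset.dvd_prod_of_mem
      rw [Finset.mem_sdiff, Finset.mem_singleton]
      exact ⟨hα, fun h => hne h.symm⟩
    obtain ⟨c, hc⟩ := hdvd
    have hPβ : P β = compPow (e - α • 𝟙 M) d ≫ (aeval (toEnd e) c : CategoryTheory.End M) := by
      rw [← aeval_X_sub_C_pow e α d]
      show aeval (toEnd e) (q β) = aeval (toEnd e) c * aeval (toEnd e) ((X - Polynomial.C α) ^ d)
      rw [← map_mul, mul_comm c, ← hc]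
    rw [hPβ, ← Category.assoc, kernel.condition, Limits.zero_comp]
  -- the eigenvalue finset
  set s : Finset ℂ := t.filter (fun α => ¬ IsZero (genEigenKer e d α)) with hs
  have hsub : s ⊆ t := Finset.filter_subset _ _
  have hsmem : ∀ α ∈ s, ¬ IsZero (genEigenKer e d α) :=
    fun α hα => (Finset.mem_filter.mp hα).2
  -- P vanishes off s
  have hPzero : ∀ α ∈ t, α ∉ s → P α = 0 := by
    intro α hαt hαs
    have hz : IsZero (genEigenKer e d α) := by
      by_contra h
      exact hαs (Finset.mem_filter.mpr ⟨hαt, h⟩)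
    have hlift : P α = kernel.lift _ (P α) (hker0 α hαt) ≫ kernel.ι _ :=
      (kernel.lift_ι _ _ _).symm
    rw [hlift, hz.eq_of_tgt (kernel.lift _ (P α) (hker0 α hαt)) 0]
    exact Limits.zero_comp
  have hPsums : ∑ α ∈ s, P α = 𝟙 M := by
    rw [← hPsum]
    exact Finset.sum_subset hsub (fun x hx hxs => hPzero x hx hxs)
  -- the projections
  let π : ∀ α : s, (M ⟶ genEigenKer e d (α : ℂ)) :=
    fun α => kernel.lift _ (P α) (hker0 α (hsub α.2))
  have hπι : ∀ α : s, π α ≫ kernel.ι _ = P (α : ℂ) := fun α => kernel.lift_ι _ _ _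
  have hιπ_self : ∀ α : s, kernel.ι (compPow (e - (α : ℂ) • 𝟙 M) d) ≫ π α = 𝟙 _ := by
    intro α
    erw [← cancel_mono (kernel.ι (compPow (e - (α : ℂ) • 𝟙 M) d))]
    erw [Category.assoc, hπι, Category.id_comp]
    have h1 : kernel.ι (compPow (e - (α : ℂ) • 𝟙 M) d) ≫ (∑ β ∈ s, P β)
        = kernel.ι (compPow (e - (α : ℂ) • 𝟙 M) d) := by
      rw [hPsums, Category.comp_id]
    rw [Preadditive.comp_sum] at h1
    rw [Finset.sum_eq_single (α : ℂ)] at h1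
    · exact h1
    · intro β hβ hne
      exact hιP (α : ℂ) (hsub α.2) β (hsub hβ) hne
    · intro h
      exact absurd α.2 h
  have hιπ_ne : ∀ α β : s, α ≠ β →
      kernel.ι (compPow (e - (α : ℂ) • 𝟙 M) d) ≫ π β = 0 := by
    intro α β hne
    have h := hιP (α : ℂ) (hsub α.2) (β : ℂ) (hsub β.2)
      (fun hc => hne (Subtype.ext hc).symm)
    have h2 : (kernel.ι (compPow (e - (α : ℂ) • 𝟙 M) d) ≫ π β) ≫
        kernel.ι (compPow (e - (β : ℂ) • 𝟙 M) d) = 0 := by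
      erw [Category.assoc, hπι]
      exact h
    exact @zero_of_comp_mono _ _ _ _ _ _ _ _
      (inferInstanceAs (Mono (kernel.ι (compPow (e - (β : ℂ) • 𝟙 M) d)))) h2
  -- assemble
  refine ⟨s, ?_, hsmem, ?_, ?_⟩
  · intro α hα
    by_contra hαs
    by_cases hαt : α ∈ t
    · exact hαs (Finset.mem_filter.mpr ⟨hαt, hα⟩)
    · exact hα (hout α hαt)
  · refine ⟨⟨biproduct.lift π, ?_, ?_⟩⟩
    · -- desc ≫ lift = 𝟙 biproduct
      apply biproduct.hom_ext'
      intro j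
      apply biproduct.hom_ext
      intro k
      simp only [Category.assoc, biproduct.ι_desc_assoc, biproduct.lift_π, Category.comp_id,
        Category.id_comp]
      by_cases h : j = k
      · subst h
        rw [biproduct.ι_π_self]
        erw [biproduct.ι_desc_assoc]
        exact hιπ_self j
      · rw [biproduct.ι_π_ne _ h]
        erw [biproduct.ι_desc_assoc]
        exact hιπ_ne j k h
    · -- lift ≫ desc = 𝟙 M
      erw [biproduct.lift_desc]
      simp only [hπι]
      rw [Finset.sum_coe_sort s P, hPsums]
  · intro he h0
    have hnz : ¬ IsZero (genEigenKer e d 0) := hsmem 0 h0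
    apply hnz
    have h00 : e - (0 : ℂ) • 𝟙 M = e := by simp
    haveI : IsIso e := he
    haveI hiso : IsIso (compPow (e - (0 : ℂ) • 𝟙 M) d) := by
      rw [h00]; exact isIso_compPow e d
    exact (isZero_zero C).of_iso (kernel.ofMono (compPow (e - (0 : ℂ) • 𝟙 M) d))
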